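/- For any simplicial complex C and any face S of C, the link lk_C(S) = {T ⊆ V \ S : S ∪ T ∈ C} satisfies λ(lk_C(S)) ≤ λ(C), where λ denotes the minimal d such that the complex is d-Leray. -/

import Mathlib

/-- An abstract simplicial complex on vertex set `V`: a downward closed set of
finite sets. -/
def IsComplex {V : Type*} (C : Set (Finset V)) : Prop :=
  ∀ s ∈ C, ∀ t ⊆ s, t ∈ C

/-- The simplicial boundary of a single simplex `s` (as a formal ℤ-linear
combination of its codimension-one faces, with the usual alternating signs
determined by the linear order on the vertices). -/
noncomputable def simplexBoundary {V : Type*} [LinearOrder V] (s : Finset V) :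
    Finset V →₀ ℤ :=
  ∑ i : Fin (s.sort (· ≤ ·)).length,
    ((-1 : ℤ) ^ (i : ℕ)) • Finsupp.single (s.erase ((s.sort (· ≤ ·)).get i)) 1

/-- The boundary operator on formal ℤ-linear combinations of finite subsets of
`V`, extended linearly from `simplexBoundary`.  (Chains of vertices are sent to
multiples of the empty set, so this complex is the augmented one and computes
reduced homology.) -/
noncomputable def boundaryMap (V : Type*) [LinearOrder V] :
    (Finset V →₀ ℤ) →ₗ[ℤ] (Finset V →₀ ℤ) :=
  Finsupp.linearCombination ℤ simplexBoundary

/-- The faces of the induced subcomplex `C[W]` having exactly `m` vertices. -/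
def facesIn {V : Type*} (C : Set (Finset V)) (W : Set V) (m : ℕ) :
    Set (Finset V) :=
  {s | s ∈ C ∧ ↑s ⊆ W ∧ s.card = m}

/-- A chain is supported on a set `A` of simplices. -/
def SupportedOn {V : Type*} (A : Set (Finset V)) (x : Finset V →₀ ℤ) : Prop :=
  ∀ s, x s ≠ 0 → s ∈ A

/-- The reduced simplicial homology `H̃_j(C[W];ℤ)` vanishes: every `j`-cycle of
the induced subcomplex `C[W]` is the boundary of a `(j+1)`-chain of `C[W]`.
(A `j`-dimensional simplex has `j+1` vertices; since the chain complex is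
augmented, the `j = 0` case is the reduced one.) -/
def ReducedHomologyVanishes {V : Type*} [LinearOrder V] (C : Set (Finset V))
    (W : Set V) (j : ℕ) : Prop :=
  ∀ x : Finset V →₀ ℤ, SupportedOn (facesIn C W (j + 1)) x →
    boundaryMap V x = 0 →
      ∃ y : Finset V →₀ ℤ, SupportedOn (facesIn C W (j + 2)) y ∧
        boundaryMap V y = x

/-- `C` is `d`-Leray: all reduced homology groups `H̃_j(C[W];ℤ)` with `j ≥ d`
of all induced subcomplexes vanish. -/
def IsLeray {V : Type*} [LinearOrder V] (d : ℕ) (C : Set (Finset V)) : Prop :=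
  ∀ (W : Set V) (j : ℕ), d ≤ j → ReducedHomologyVanishes C W j

/-- The link of a face `S` in the complex `C`. -/
def linkOf {V : Type*} [DecidableEq V] (C : Set (Finset V)) (S : Finset V) :
    Set (Finset V) :=
  {T | Disjoint T S ∧ S ∪ T ∈ C}


section Aux
variable {V : Type*} [LinearOrder V]

lemma countP_lt_get (l : List V) (hl : l.SortedLT) (i : Fin l.length) :
    l.countP (fun w => decide (w < l.get i)) = i := by
  have hmono := hl.strictMono_get
  set p : V → Bool := fun w => decide (w < l.get i) with hp
  rw [List.countP_eq_length_filter]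
  have h1 : (l.take i).filter p = l.take i := by
    rw [List.filter_eq_self]
    intro a ha
    obtain ⟨j, hj, rfl⟩ := List.getElem_of_mem ha
    have hj' : j < (i : ℕ) := by simp [List.length_take] at hj; omega
    rw [List.getElem_take]
    simp only [hp, decide_eq_true_eq]
    exact hmono (show (⟨j, by omega⟩ : Fin l.length) < i from hj')
  have h2 : (l.drop i).filter p = [] := by
    rw [List.filter_eq_nil_iff]
    intro a ha
    obtain ⟨j, hj, rfl⟩ := List.getElem_of_mem ha
    have hj' : (i:ℕ) + j < l.length := by simp [List.length_drop] at hj; omega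
    rw [List.getElem_drop]
    simp only [hp, decide_eq_true_eq, not_lt]
    exact hmono.le_iff_le.mpr (show i ≤ (⟨i + j, hj'⟩ : Fin l.length) from by simp [Fin.le_def])
  have key : List.filter p l = List.filter p (l.take i ++ l.drop i) := by
    rw [List.take_append_drop]
  rw [key, List.filter_append, h1, h2]
  simp [List.length_take]

def sgn (s : Finset V) (u : V) : ℤ := (-1) ^ (s.filter (· < u)).card


lemma card_filter_lt (s : Finset V) (i : Fin (s.sort (· ≤ ·)).length) :
    (s.filter (· < (s.sort (· ≤ ·)).get i)).card = i := by
  have h1 : s.filter (· < (s.sort (· ≤ ·)).get i)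
      = ((s.sort (· ≤ ·)).filter (fun w => decide (w < (s.sort (· ≤ ·)).get i))).toFinset := by
    rw [List.toFinset_filter]
    simp
  rw [h1, List.toFinset_card_of_nodup (List.Nodup.filter _ (s.sort_nodup _)),
    ← List.countP_eq_length_filter]
  exact countP_lt_get _ (s.sortedLT_sort) i

lemma simplexBoundary_eq (s : Finset V) :
    simplexBoundary s = ∑ u ∈ s, sgn s u • Finsupp.single (s.erase u) 1 := by
  rw [simplexBoundary]
  set l := s.sort (· ≤ ·) with hl
  refine Finset.sum_bij (fun (i : Fin l.length) _ => l.get i) ?_ ?_ ?_ ?_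
  · intro i _
    rw [← Finset.mem_sort (· ≤ ·)]
    exact l.get_mem _
  · intro i _ j _ hij
    exact (List.Nodup.get_inj_iff (by rw [hl]; exact s.sort_nodup _)).mp hij
  · intro u hu
    rw [← Finset.mem_sort (α := V) (· ≤ ·) (s := s), ← hl, List.mem_iff_get] at hu
    obtain ⟨i, rfl⟩ := hu
    exact ⟨i, Finset.mem_univ _, rfl⟩
  · intro i _
    rw [sgn, card_filter_lt s i]

lemma sgn_mul_self (s : Finset V) (u : V) : sgn s u * sgn s u = 1 := by
  rw [sgn, ← pow_add]
  exact Even.neg_one_pow ⟨_, rfl⟩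

lemma sgn_insert_self (t : Finset V) (v : V) (hv : v ∉ t) :
    sgn (insert v t) v = sgn t v := by
  rw [sgn, sgn, Finset.filter_insert, if_neg (lt_irrefl v)]

lemma sgn_key {t : Finset V} {u v : V} (hv : v ∉ t) (hu : u ∈ t) :
    sgn (insert v t) v * sgn (insert v t) u
      = -(sgn t u * sgn (insert v (t.erase u)) v) := by
  have huv : u ≠ v := fun h => hv (h ▸ hu)
  have h1 : sgn (insert v t) v = sgn t v := sgn_insert_self t v hv
  have h2 : sgn (insert v (t.erase u)) v = sgn (t.erase u) v :=
    sgn_insert_self _ v (fun h => hv (Finset.erase_subset _ _ h))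
  rw [h1, h2]
  rcases lt_or_gt_of_ne huv with h | h
  · -- u < v
    have hA : t.filter (fun x => x < v) = insert u ((t.erase u).filter (fun x => x < v)) := by
      ext w
      simp only [Finset.mem_filter, Finset.mem_insert, Finset.mem_erase]
      constructor
      · rintro ⟨hw, hwv⟩
        by_cases hwu : w = u
        · exact Or.inl hwu
        · exact Or.inr ⟨⟨hwu, hw⟩, hwv⟩
      · rintro (rfl | ⟨⟨_, hw⟩, hwv⟩)
        · exact ⟨hu, h⟩
        · exact ⟨hw, hwv⟩
    have hB : (insert v t).filter (fun x => x < u) = t.filter (fun x => x < u) := by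
      rw [Finset.filter_insert, if_neg (fun hc : v < u => absurd (hc.trans h) (lt_irrefl v))]
    have hu' : u ∉ (t.erase u).filter (fun x => x < v) :=
      fun hc => (Finset.mem_erase.mp (Finset.mem_filter.mp hc).1).1 rfl
    simp only [sgn, hA, hB, Finset.card_insert_of_notMem hu', pow_succ]
    ring
  · -- v < u
    have hB : (insert v t).filter (fun x => x < u) = insert v (t.filter (fun x => x < u)) := by
      rw [Finset.filter_insert, if_pos h]
    have hA : (t.erase u).filter (fun x => x < v) = t.filter (fun x => x < v) := by
      rw [Finset.filter_erase, Finset.erase_eq_of_notMem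
        (fun hc => absurd ((Finset.mem_filter.mp hc).2.trans h) (lt_irrefl u))]
    have hv' : v ∉ t.filter (fun x => x < u) := fun hc => hv (Finset.mem_filter.mp hc).1
    simp only [sgn, hA, hB, Finset.card_insert_of_notMem hv', pow_succ]
    ring

lemma sgn_key2 {t : Finset V} {u v : V} (hv : v ∉ t) (hu : u ∈ t) :
    sgn (insert v t) u * sgn (insert v (t.erase u)) v
      = -(sgn (insert v t) v * sgn t u) := by
  have h := sgn_key hv hu
  have ha := sgn_mul_self (insert v t) v
  have hd := sgn_mul_self (insert v (t.erase u)) v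
  set a := sgn (insert v t) v
  set b := sgn (insert v t) u
  set c := sgn t u
  set d := sgn (insert v (t.erase u)) v
  linear_combination a * d * h - b * d * ha - a * c * hd

end Aux

section Cone
variable {V : Type*} [LinearOrder V] (v : V)

noncomputable def coneFun (t : Finset V) : Finset V →₀ ℤ :=
  if v ∈ t then 0 else sgn (insert v t) v • Finsupp.single (insert v t) 1

noncomputable def coneMap : (Finset V →₀ ℤ) →ₗ[ℤ] (Finset V →₀ ℤ) :=
  Finsupp.linearCombination ℤ (coneFun v)

noncomputable def extrFun (s : Finset V) : Finset V →₀ ℤ :=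
  if v ∈ s then sgn s v • Finsupp.single (s.erase v) 1 else 0

noncomputable def extrMap : (Finset V →₀ ℤ) →ₗ[ℤ] (Finset V →₀ ℤ) :=
  Finsupp.linearCombination ℤ (extrFun v)

lemma boundary_single (s : Finset V) :
    boundaryMap V (Finsupp.single s (1:ℤ)) = simplexBoundary s := by
  rw [boundaryMap, Finsupp.linearCombination_single, one_smul]

lemma coneMap_single (t : Finset V) :
    coneMap v (Finsupp.single t (1:ℤ)) = coneFun v t := by
  rw [coneMap, Finsupp.linearCombination_single, one_smul]

lemma extrMap_single (s : Finset V) :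
    extrMap v (Finsupp.single s (1:ℤ)) = extrFun v s := by
  rw [extrMap, Finsupp.linearCombination_single, one_smul]

/-- Homotopy identity on single simplices. -/
lemma homotopy_single (s : Finset V) :
    boundaryMap V (coneFun v s) + coneMap v (simplexBoundary s)
      = Finsupp.single s 1 := by
  by_cases hv : v ∈ s
  · rw [coneFun, if_pos hv, map_zero, zero_add, simplexBoundary_eq, map_sum]
    rw [← Finset.sum_erase_add s _ hv]
    have hz : ∀ u ∈ s.erase v, coneMap v (sgn s u • Finsupp.single (s.erase u) 1) = 0 := by
      intro u hu
      rw [map_smul, coneMap_single, coneFun,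
        if_pos (Finset.mem_erase.mpr ⟨fun h => (Finset.mem_erase.mp hu).1 h.symm, hv⟩), smul_zero]
    rw [Finset.sum_eq_zero hz, zero_add, map_smul, coneMap_single, coneFun,
      if_neg (Finset.notMem_erase v s), Finset.insert_erase hv, smul_smul,
      sgn_mul_self, one_smul]
  · rw [coneFun, if_neg hv, map_smul, boundary_single, simplexBoundary_eq,
      simplexBoundary_eq, map_sum, Finset.sum_insert hv, Finset.erase_insert hv,
      smul_add, smul_smul, sgn_mul_self, one_smul, Finset.smul_sum]
    rw [add_assoc, add_eq_left, ← Finset.sum_add_distrib]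
    apply Finset.sum_eq_zero
    intro u hu
    have huv : v ≠ u := fun h => hv (h ▸ hu)
    rw [map_smul, coneMap_single, coneFun,
      if_neg (show v ∉ s.erase u from fun h => hv (Finset.mem_erase.mp h).2),
      Finset.erase_insert_of_ne huv, smul_smul, smul_smul, ← add_smul,
      sgn_key hv hu, neg_add_cancel, zero_smul]

lemma homotopy_eq :
    (boundaryMap V).comp (coneMap v) + (coneMap v).comp (boundaryMap V)
      = LinearMap.id := by
  apply Finsupp.lhom_ext
  intro t b
  have hb : (Finsupp.single t b : Finset V →₀ ℤ) = b • Finsupp.single t 1 := by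
    rw [Finsupp.smul_single, smul_eq_mul, mul_one]
  simp only [LinearMap.add_apply, LinearMap.comp_apply, LinearMap.id_apply, hb, map_smul]
  rw [coneMap_single, boundary_single, homotopy_single]

lemma homotopy (x : Finset V →₀ ℤ) :
    boundaryMap V (coneMap v x) + coneMap v (boundaryMap V x) = x := by
  have h := congrArg (fun F => F x) (homotopy_eq v)
  simpa using h

lemma extr_boundary_single (s : Finset V) :
    extrMap v (simplexBoundary s) + boundaryMap V (extrFun v s) = 0 := by
  by_cases hv : v ∈ s
  · obtain ⟨t, hvt, rfl⟩ : ∃ t, v ∉ t ∧ s = insert v t :=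
      ⟨s.erase v, Finset.notMem_erase v s, (Finset.insert_erase hv).symm⟩
    rw [extrFun, if_pos (Finset.mem_insert_self v t), Finset.erase_insert hvt,
      map_smul, boundary_single, simplexBoundary_eq (insert v t), map_sum,
      Finset.sum_insert hvt, simplexBoundary_eq t, Finset.smul_sum]
    rw [map_smul, extrMap_single, extrFun,
      if_neg (show v ∉ (insert v t).erase v from fun h => (Finset.mem_erase.mp h).1 rfl),
      smul_zero, zero_add, add_comm, ← Finset.sum_add_distrib]
    apply Finset.sum_eq_zero
    intro u hu
    have huv : v ≠ u := fun h => hvt (h ▸ hu)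
    have hvtu : v ∉ t.erase u := fun h => hvt (Finset.mem_erase.mp h).2
    rw [map_smul, extrMap_single, Finset.erase_insert_of_ne huv, extrFun,
      if_pos (Finset.mem_insert_self v _), Finset.erase_insert hvtu,
      smul_smul, smul_smul, ← add_smul, sgn_key2 hvt hu, add_neg_cancel, zero_smul]
  · rw [extrFun, if_neg hv, map_zero, add_zero, simplexBoundary_eq, map_sum]
    apply Finset.sum_eq_zero
    intro u hu
    rw [map_smul, extrMap_single, extrFun,
      if_neg (show v ∉ s.erase u from fun h => hv (Finset.mem_erase.mp h).2), smul_zero]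

lemma anticomm_eq :
    (extrMap v).comp (boundaryMap V) = -((boundaryMap V).comp (extrMap v)) := by
  apply Finsupp.lhom_ext
  intro s b
  have hb : (Finsupp.single s b : Finset V →₀ ℤ) = b • Finsupp.single s 1 := by
    rw [Finsupp.smul_single, smul_eq_mul, mul_one]
  simp only [LinearMap.neg_apply, LinearMap.comp_apply, hb, map_smul]
  rw [extrMap_single, boundary_single]
  rw [eq_neg_of_add_eq_zero_left (extr_boundary_single v s)]

lemma anticomm (x : Finset V →₀ ℤ) :
    extrMap v (boundaryMap V x) = -(boundaryMap V (extrMap v x)) := by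
  have h := congrArg (fun F => F x) (anticomm_eq v)
  simpa using h

lemma lc_support {f : Finset V → (Finset V →₀ ℤ)} {x : Finset V →₀ ℤ} {s : Finset V}
    (h : Finsupp.linearCombination ℤ f x s ≠ 0) : ∃ t, x t ≠ 0 ∧ f t s ≠ 0 := by
  rw [Finsupp.linearCombination_apply, Finsupp.sum, Finsupp.finset_sum_apply] at h
  obtain ⟨t, ht, hne⟩ := Finset.exists_ne_zero_of_sum_ne_zero h
  refine ⟨t, Finsupp.mem_support_iff.mp ht, fun hc => hne ?_⟩
  rw [Finsupp.smul_apply, hc, smul_zero]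

lemma coneMap_support {x : Finset V →₀ ℤ} {s : Finset V} (h : coneMap v x s ≠ 0) :
    ∃ t, x t ≠ 0 ∧ v ∉ t ∧ s = insert v t := by
  obtain ⟨t, hxt, hft⟩ := lc_support h
  by_cases hv : v ∈ t
  · rw [coneFun, if_pos hv] at hft; simp at hft
  · refine ⟨t, hxt, hv, ?_⟩
    rw [coneFun, if_neg hv, Finsupp.smul_apply, Finsupp.single_apply] at hft
    by_contra hne
    rw [if_neg (fun h => hne h.symm), smul_zero] at hft
    exact hft rfl

lemma extrMap_support {x : Finset V →₀ ℤ} {s : Finset V} (h : extrMap v x s ≠ 0) :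
    ∃ t, x t ≠ 0 ∧ v ∈ t ∧ s = t.erase v := by
  obtain ⟨t, hxt, hft⟩ := lc_support h
  by_cases hv : v ∈ t
  · refine ⟨t, hxt, hv, ?_⟩
    rw [extrFun, if_pos hv, Finsupp.smul_apply, Finsupp.single_apply] at hft
    by_contra hne
    rw [if_neg (fun h => hne h.symm), smul_zero] at hft
    exact hft rfl
  · rw [extrFun, if_neg hv] at hft; simp at hft

lemma extrMap_of_free {x : Finset V →₀ ℤ} (hx : ∀ t, x t ≠ 0 → v ∉ t) :
    extrMap v x = 0 := by
  rw [extrMap, Finsupp.linearCombination_apply, Finsupp.sum]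
  apply Finset.sum_eq_zero
  intro t ht
  rw [extrFun, if_neg (hx t (Finsupp.mem_support_iff.mp ht)), smul_zero]

lemma extr_coneMap_of_free {x : Finset V →₀ ℤ} (hx : ∀ t, x t ≠ 0 → v ∉ t) :
    extrMap v (coneMap v x) = x := by
  conv_rhs => rw [← Finsupp.sum_single x]
  rw [coneMap, Finsupp.linearCombination_apply, Finsupp.sum, map_sum, Finsupp.sum]
  apply Finset.sum_congr rfl
  intro t ht
  have hv : v ∉ t := hx t (Finsupp.mem_support_iff.mp ht)
  have hv' : v ∉ (insert v t).erase v := fun h => (Finset.mem_erase.mp h).1 rfl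
  rw [map_smul, coneFun, if_neg hv, map_smul, extrMap_single, extrFun,
    if_pos (Finset.mem_insert_self v t), Finset.erase_insert hv, smul_smul, smul_smul,
    mul_assoc, sgn_mul_self, mul_one, Finsupp.smul_single, smul_eq_mul, mul_one]

end Cone

section Main
variable {V : Type*} [LinearOrder V]

lemma notMem_of_subset_diff {t : Finset V} {W : Set V} {v : V}
    (h : ↑t ⊆ W \ {v}) : v ∉ t := fun hv => ((h hv).2 rfl).elim

lemma leray_link_vertex {C : Set (Finset V)} (hC : IsComplex C) (v : V) {d : ℕ}
    (hL : IsLeray d C) : IsLeray d (linkOf C {v}) := by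
  intro W j hj x hx hdx
  have hxfree : ∀ t, x t ≠ 0 → v ∉ t := by
    intro t ht
    exact fun h => Finset.disjoint_singleton_right.mp ((hx t ht).1.1) h
  have hxC : SupportedOn (facesIn C (W \ {v}) (j + 1)) x := by
    intro t ht
    obtain ⟨⟨hdisj, hcup⟩, htW, hcard⟩ := hx t ht
    refine ⟨hC _ hcup _ Finset.subset_union_right, ?_, hcard⟩
    intro w hw
    exact ⟨htW hw, fun he => (Finset.disjoint_singleton_right.mp hdisj) (he ▸ hw)⟩
  obtain ⟨y, hy, hdy⟩ := hL (W \ {v}) j hj x hxC hdx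
  set z := coneMap v x - y with hz
  have hdz : boundaryMap V z = 0 := by
    have h1 := homotopy v x
    rw [hdx, map_zero, add_zero] at h1
    rw [hz, map_sub, h1, hdy, sub_self]
  have hzsupp : SupportedOn (facesIn C (W ∪ {v}) (j + 2)) z := by
    intro s hs
    have hcases : coneMap v x s ≠ 0 ∨ y s ≠ 0 := by
      by_contra hcon
      push_neg at hcon
      rw [hz] at hs
      rw [Finsupp.sub_apply, hcon.1, hcon.2, sub_zero] at hs
      exact hs rfl
    rcases hcases with h | h
    · obtain ⟨t, hxt, hvt, rfl⟩ := coneMap_support v h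
      obtain ⟨⟨hdisj, hcup⟩, htW, hcard⟩ := hx t hxt
      refine ⟨by rwa [← Finset.insert_eq] at hcup, ?_, ?_⟩
      · intro w hw
        rcases Finset.mem_insert.mp hw with rfl | hw'
        · exact Or.inr rfl
        · exact Or.inl (htW hw')
      · rw [Finset.card_insert_of_notMem hvt, hcard]
    · obtain ⟨htC, htW, hcard⟩ := hy s h
      exact ⟨htC, fun w hw => Or.inl (htW hw).1, hcard⟩
  obtain ⟨u, hu, hdu⟩ := hL (W ∪ {v}) (j + 1) (le_trans hj (Nat.le_succ j)) z hzsupp hdz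
  refine ⟨-(extrMap v u), ?_, ?_⟩
  · intro s hs
    have hs' : extrMap v u s ≠ 0 := by
      intro hc
      rw [Finsupp.neg_apply, hc, neg_zero] at hs
      exact hs rfl
    obtain ⟨t, hut, hvt, rfl⟩ := extrMap_support v hs'
    obtain ⟨htC, htW, hcard⟩ := hu t hut
    refine ⟨⟨Finset.disjoint_singleton_right.mpr (Finset.notMem_erase v t), ?_⟩, ?_, ?_⟩
    · rw [← Finset.insert_eq, Finset.insert_erase hvt]; exact htC
    · intro w hw
      have hw' := Finset.mem_erase.mp hw
      rcases htW hw'.2 with hW | hv'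
      · exact hW
      · exact absurd hv' hw'.1
    · rw [Finset.card_erase_of_mem hvt, hcard]; omega
  · have h1 := anticomm v u
    rw [hdu, hz, map_sub] at h1
    rw [extr_coneMap_of_free v hxfree,
      extrMap_of_free v (fun t ht => notMem_of_subset_diff (hy t ht).2.1), sub_zero] at h1
    rw [map_neg, ← h1]

end Main



section Link
variable {V : Type*} [LinearOrder V]

lemma linkOf_empty (C : Set (Finset V)) : linkOf C ∅ = C := by
  ext T; simp [linkOf]

lemma linkOf_isComplex {C : Set (Finset V)} (hC : IsComplex C) (S : Finset V) :
    IsComplex (linkOf C S) := by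
  intro T hT t ht
  exact ⟨Finset.disjoint_of_subset_left ht hT.1,
    hC _ hT.2 _ (Finset.union_subset_union_right ht)⟩

lemma linkOf_linkOf {C : Set (Finset V)} {v : V} {S : Finset V} (hv : v ∉ S) :
    linkOf (linkOf C {v}) S = linkOf C (insert v S) := by
  ext T
  simp only [linkOf, Set.mem_setOf_eq, Finset.disjoint_insert_right,
    Finset.disjoint_singleton_right, Finset.mem_union, Finset.insert_union,
    ← Finset.insert_eq]
  constructor
  · rintro ⟨h1, h2, h3⟩
    exact ⟨⟨fun hvT => h2 (Or.inr hvT), h1⟩, h3⟩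
  · rintro ⟨⟨hvT, h1⟩, h3⟩
    exact ⟨h1, fun hc => hc.elim hv hvT, h3⟩

end Link

/-- The Leray number of a link is at most the Leray number of the complex:
for every face `S` of `C` and every `d`, if `C` is `d`-Leray then so is
`lk_C(S)`; hence `λ(lk_C(S)) ≤ λ(C)`. -/
theorem stmt_6 {V : Type*} [LinearOrder V] (C : Set (Finset V))
    (hC : IsComplex C) (S : Finset V) (hS : S ∈ C) (d : ℕ)
    (hL : IsLeray d C) : IsLeray d (linkOf C S) := by
  induction S using Finset.induction generalizing C with
  | empty => rwa [linkOf_empty]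
  | @insert v S' hv ih =>
    rw [← linkOf_linkOf hv]
    exact ih (linkOf C {v}) (linkOf_isComplex hC {v})
      ⟨Finset.disjoint_singleton_right.mpr hv, by rwa [← Finset.insert_eq]⟩
      (leray_link_vertex hC v hL)
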